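/- Let X be a uniformly convex Banach space, Φ a Young function with Φ(t) = ∫₀ᵗ φ, and ρ_Φ : (0,∞) → (0,∞) satisfy Φ(ρ_Φ(t))/ρ_Φ(t) ≥ t for all t > 0. Let f be proper convex lsc, x ∈ X, r > 0. Set R₀ = ‖x − prox^Φ_{1,f}(x)‖. Then for every y ∈ B(x,r) and every λ ∈ (0,1], ‖y − prox^Φ_{λ,f}(y)‖ ≤ max{1, ρ_Φ(φ(R₀) + (r + R₀)φ(R₀) + Φ(r + R₀))}. -/

import Mathlib

open MeasureTheory Filter Set intervalIntegral

/-- Uniform bound on `‖y − prox^Φ_{λ,f}(y)‖` for `y` in a ball and `λ ∈ (0,1]`. -/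
theorem stmt_10 {X : Type*} [NormedAddCommGroup X] [NormedSpace ℝ X] [CompleteSpace X]
    (δX : ℝ → ℝ)
    (hδX : ∀ ε ∈ Set.Ioc (0:ℝ) 2, 0 < δX ε ∧ ∀ u v : X, ‖u‖ ≤ 1 → ‖v‖ ≤ 1 →
      ε ≤ ‖u - v‖ → ‖(1/2 : ℝ) • (u + v)‖ ≤ 1 - δX ε)
    (φ Φ : ℝ → ℝ)
    (hφmono : StrictMonoOn φ (Set.Ici 0)) (hφ0 : φ 0 = 0)
    (hφrc : ∀ t : ℝ, 0 ≤ t → ContinuousWithinAt φ (Set.Ici t) t)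
    (hφtop : Filter.Tendsto φ Filter.atTop Filter.atTop)
    (hΦint : ∀ t : ℝ, 0 ≤ t → Φ t = ∫ s in (0:ℝ)..t, φ s)
    (ρ : ℝ → ℝ) (hρpos : ∀ t > (0:ℝ), 0 < ρ t)
    (hρ : ∀ t > (0:ℝ), t ≤ Φ (ρ t) / ρ t)
    (f : X → EReal) (hfbot : ∀ x, f x ≠ ⊥) (hfproper : ∃ x, f x ≠ ⊤)
    (hfconv : ∀ x y : X, ∀ t ∈ Set.Icc (0:ℝ) 1,
      f (t • x + (1 - t) • y) ≤ ((t : ℝ) : EReal) * f x + ((1 - t : ℝ) : EReal) * f y)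
    (hflsc : LowerSemicontinuous f)
    (prox : ℝ → X → X)
    (hprox : ∀ lam > (0:ℝ), ∀ w y : X,
      f (prox lam w) + ((Φ ‖w - prox lam w‖ / φ lam : ℝ) : EReal) ≤
        f y + ((Φ ‖w - y‖ / φ lam : ℝ) : EReal))
    (x : X) (r : ℝ) (hr : 0 < r) :
    ∀ y ∈ Metric.closedBall x r, ∀ lam ∈ Set.Ioc (0:ℝ) 1,
      ‖y - prox lam y‖ ≤
        max 1 (ρ (φ ‖x - prox 1 x‖ + (r + ‖x - prox 1 x‖) * φ ‖x - prox 1 x‖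
          + Φ (r + ‖x - prox 1 x‖))) := by
  -- basic facts about φ
  have hφnn : ∀ t : ℝ, 0 ≤ t → 0 ≤ φ t := by
    intro t ht
    rcases eq_or_lt_of_le ht with h | h
    · rw [← h, hφ0]
    · rw [← hφ0]; exact (hφmono Set.self_mem_Ici ht h).le
  have hφpos : ∀ t : ℝ, 0 < t → 0 < φ t := by
    intro t ht
    rw [← hφ0]; exact hφmono Set.self_mem_Ici ht.le ht
  have hφm : MonotoneOn φ (Set.Ici 0) := hφmono.monotoneOn
  have hInt : ∀ a b : ℝ, 0 ≤ a → 0 ≤ b → IntervalIntegrable φ volume a b := by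
    intro a b ha hb
    refine (hφm.mono ?_).intervalIntegrable
    intro z hz
    rcases Set.mem_uIcc.mp hz with ⟨h1, _⟩ | ⟨h1, _⟩
    · exact le_trans ha h1
    · exact le_trans hb h1
  have hΦdiff : ∀ a b : ℝ, 0 ≤ a → a ≤ b → Φ b = Φ a + ∫ s in a..b, φ s := by
    intro a b ha hab
    rw [hΦint a ha, hΦint b (le_trans ha hab)]
    exact (integral_add_adjacent_intervals (hInt 0 a le_rfl ha)
      (hInt a b ha (le_trans ha hab))).symm
  have hΦmono : ∀ a b : ℝ, 0 ≤ a → a ≤ b → Φ a ≤ Φ b := by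
    intro a b ha hab
    rw [hΦdiff a b ha hab]
    have : 0 ≤ ∫ s in a..b, φ s :=
      intervalIntegral.integral_nonneg hab (fun s hs => hφnn s (le_trans ha hs.1))
    linarith
  have hupper : ∀ a b : ℝ, 0 ≤ a → a ≤ b → Φ b ≤ Φ a + (b - a) * φ b := by
    intro a b ha hab
    have hb : 0 ≤ b := le_trans ha hab
    rw [hΦdiff a b ha hab]
    have h1 : (∫ s in a..b, φ s) ≤ ∫ _s in a..b, φ b := by
      refine intervalIntegral.integral_mono_on hab (hInt a b ha hb)
        intervalIntegrable_const ?_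
      intro s hs
      exact hφm (le_trans ha hs.1) hb hs.2
    rw [intervalIntegral.integral_const, smul_eq_mul] at h1
    linarith
  have hlower : ∀ a b : ℝ, 0 ≤ a → a ≤ b → Φ a + (b - a) * φ a ≤ Φ b := by
    intro a b ha hab
    have hb : 0 ≤ b := le_trans ha hab
    rw [hΦdiff a b ha hab]
    have h1 : (∫ _s in a..b, φ a) ≤ ∫ s in a..b, φ s := by
      refine intervalIntegral.integral_mono_on hab intervalIntegrable_const
        (hInt a b ha hb) ?_
      intro s hs
      exact hφm ha (le_trans ha hs.1) hs.1
    rw [intervalIntegral.integral_const, smul_eq_mul] at h1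
    linarith
  have hΦ0 : Φ 0 = 0 := by rw [hΦint 0 le_rfl]; simp
  have hΦnn : ∀ t : ℝ, 0 ≤ t → 0 ≤ Φ t := by
    intro t ht; rw [← hΦ0]; exact hΦmono 0 t le_rfl ht
  have hratio : ∀ a b : ℝ, 0 < a → a ≤ b → Φ a / a ≤ Φ b / b := by
    intro a b ha hab
    have hb : 0 < b := lt_of_lt_of_le ha hab
    rw [div_le_div_iff₀ ha hb]
    have h1 : Φ a ≤ (a - 0) * φ a := by
      have := hupper 0 a le_rfl ha.le; rw [hΦ0] at this; linarith
    have h2 := hlower a b ha.le hab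
    have h3 := hφnn a ha.le
    nlinarith
  have hΦrpos : 0 < Φ r := by
    have h1 := hlower (r/2) r (by linarith) (by linarith)
    have h2 := hΦnn (r/2) (by linarith)
    have h3 := hφpos (r/2) (by linarith)
    nlinarith
  -- main proof
  intro y hy lam hlam
  obtain ⟨hlam0, hlam1⟩ := hlam
  set q := prox 1 x with hqdef
  set p := prox lam y with hpdef
  set R0 := ‖x - q‖ with hR0def
  set R := ‖y - p‖ with hRdef
  set D := ‖p - q‖ with hDdef
  set K := φ R0 + (r + R0) * φ R0 + Φ (r + R0) with hKdef
  have hR0nn : 0 ≤ R0 := norm_nonneg _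
  have hRnn : 0 ≤ R := norm_nonneg _
  have hDnn : 0 ≤ D := norm_nonneg _
  have hyx : ‖y - x‖ ≤ r := by
    rw [Metric.mem_closedBall, dist_eq_norm] at hy; exact hy
  have hphilam : 0 < φ lam := hφpos lam hlam0
  have hφ1 : 0 < φ 1 := hφpos 1 one_pos
  have hphilam1 : φ lam ≤ φ 1 := hφm hlam0.le (by norm_num) hlam1
  -- finiteness of f at prox points
  obtain ⟨x₀, hx₀⟩ := hfproper
  have hfin : ∀ mu : ℝ, 0 < mu → ∀ w : X, f (prox mu w) ≠ ⊤ := by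
    intro mu hmu w htop
    have h := hprox mu hmu w x₀
    rw [htop] at h
    have hrhs : f x₀ + ((Φ ‖w - x₀‖ / φ mu : ℝ) : EReal) < ⊤ :=
      EReal.add_lt_top hx₀ (EReal.coe_ne_top _)
    have hlhs : ((⊤ : EReal) + ((Φ ‖w - prox mu w‖ / φ mu : ℝ) : EReal)) = ⊤ :=
      EReal.top_add_coe _
    rw [hlhs] at h
    exact absurd (top_le_iff.mp h) hrhs.ne
  set a := (f p).toReal with hadef
  set b := (f q).toReal with hbdef
  have hpa : f p = (a : EReal) := (EReal.coe_toReal (hfin lam hlam0 y) (hfbot p)).symm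
  have hqb : f q = (b : EReal) := (EReal.coe_toReal (hfin 1 one_pos x) (hfbot q)).symm
  -- Step 1: main prox inequality with test point q
  have hA : a + Φ R / φ lam ≤ b + Φ (r + R0) / φ lam := by
    have h := hprox lam hlam0 y q
    rw [hpa, hqb, ← EReal.coe_add, ← EReal.coe_add] at h
    have h' := EReal.coe_le_coe_iff.mp h
    have hyq : ‖y - q‖ ≤ r + R0 := by
      calc ‖y - q‖ = ‖(y - x) + (x - q)‖ := by abel_nf
        _ ≤ ‖y - x‖ + ‖x - q‖ := norm_add_le _ _
        _ ≤ r + R0 := by rw [← hR0def]; linarith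
    have hm : Φ ‖y - q‖ ≤ Φ (r + R0) := hΦmono _ _ (norm_nonneg _) hyq
    have : Φ ‖y - q‖ / φ lam ≤ Φ (r + R0) / φ lam :=
      div_le_div_of_nonneg_right hm hphilam.le
    linarith
  -- Step 2: subgradient-type bound: b - a ≤ D * φ R0 / φ 1
  have hkey : ∀ t : ℝ, t ∈ Set.Ioc (0:ℝ) 1 → b - a ≤ D * φ (R0 + t * D) / φ 1 := by
    intro t ht
    obtain ⟨ht0, ht1⟩ := ht
    set v := t • p + (1 - t) • q with hvdef
    have hconv := hfconv p q t ⟨ht0.le, ht1⟩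
    rw [hpa, hqb] at hconv
    have h2 : f v ≤ ((t * a + (1 - t) * b : ℝ) : EReal) := by
      rw [EReal.coe_add, EReal.coe_mul, EReal.coe_mul]; exact hconv
    have hB := hprox 1 one_pos x v
    have h3 : f q + ((Φ R0 / φ 1 : ℝ) : EReal)
        ≤ ((t * a + (1 - t) * b : ℝ) : EReal) + ((Φ ‖x - v‖ / φ 1 : ℝ) : EReal) :=
      le_trans hB (add_le_add_left h2 _)
    rw [hqb, ← EReal.coe_add, ← EReal.coe_add] at h3
    have h4 := EReal.coe_le_coe_iff.mp h3
    -- norm bound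
    have hxv : x - v = (x - q) - t • (p - q) := by
      rw [hvdef, smul_sub, sub_smul, one_smul]; abel
    have hnv : ‖x - v‖ ≤ R0 + t * D := by
      rw [hxv]
      calc ‖(x - q) - t • (p - q)‖ ≤ ‖x - q‖ + ‖t • (p - q)‖ := norm_sub_le _ _
        _ = R0 + t * D := by
          rw [norm_smul, Real.norm_eq_abs, abs_of_pos ht0, ← hR0def, ← hDdef]
    set c := φ (R0 + t * D) with hcdef
    have hΦv : Φ ‖x - v‖ ≤ Φ R0 + t * D * c := by
      have hm1 : Φ ‖x - v‖ ≤ Φ (R0 + t * D) := hΦmono _ _ (norm_nonneg _) hnv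
      have hm2 := hupper R0 (R0 + t * D) hR0nn (by nlinarith)
      have : R0 + t * D - R0 = t * D := by ring
      rw [this] at hm2
      linarith
    have h5 : b + Φ R0 / φ 1 ≤ t * a + (1 - t) * b + (Φ R0 + t * D * c) / φ 1 := by
      have : Φ ‖x - v‖ / φ 1 ≤ (Φ R0 + t * D * c) / φ 1 :=
        div_le_div_of_nonneg_right hΦv hφ1.le
      linarith
    rw [add_div] at h5
    have h6 : t * (b - a) ≤ t * (D * c / φ 1) := by
      have : t * D * c / φ 1 = t * (D * c / φ 1) := by ring
      nlinarith [h5]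
    exact le_of_mul_le_mul_left h6 ht0
  have hba : b - a ≤ D * φ R0 / φ 1 := by
    have hlim : Tendsto (fun t : ℝ => D * φ (R0 + t * D) / φ 1) (nhdsWithin 0 (Set.Ioi 0))
        (nhds (D * φ R0 / φ 1)) := by
      have h0 : Tendsto (fun t : ℝ => R0 + t * D) (nhdsWithin 0 (Set.Ioi 0))
          (nhdsWithin R0 (Set.Ici R0)) := by
        rw [tendsto_nhdsWithin_iff]
        constructor
        · have hc : Tendsto (fun t : ℝ => R0 + t * D) (nhds 0) (nhds (R0 + 0 * D)) :=
            ((continuous_const.add (continuous_id.mul continuous_const)).tendsto 0)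
          rw [zero_mul, add_zero] at hc
          exact hc.mono_left nhdsWithin_le_nhds
        · filter_upwards [self_mem_nhdsWithin] with t ht
          have : (0:ℝ) < t := ht
          simp only [Set.mem_Ici]
          exact le_add_of_nonneg_right (mul_nonneg this.le hDnn)
      have h1 : Tendsto (fun t : ℝ => φ (R0 + t * D)) (nhdsWithin 0 (Set.Ioi 0))
          (nhds (φ R0)) := (hφrc R0 hR0nn).tendsto.comp h0
      exact ((h1.const_mul D).div_const (φ 1))
    refine ge_of_tendsto hlim ?_
    filter_upwards [Ioc_mem_nhdsGT one_pos] with t ht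
    exact hkey t ht
  -- Step 3: bound on D
  have hD : D ≤ R + r + R0 := by
    calc D = ‖(p - y) + (y - x) + (x - q)‖ := by rw [hDdef]; congr 1; abel
      _ ≤ ‖(p - y) + (y - x)‖ + ‖x - q‖ := norm_add_le _ _
      _ ≤ ‖p - y‖ + ‖y - x‖ + ‖x - q‖ := by linarith [norm_add_le (p - y) (y - x)]
      _ ≤ R + r + R0 := by
        rw [← hR0def]
        have : ‖p - y‖ = R := by rw [hRdef, norm_sub_rev]
        linarith
  -- Step 4: key bound on Φ R
  have hΦR : Φ R ≤ (R + r + R0) * φ R0 + Φ (r + R0) := by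
    have h0 : (Φ R - Φ (r + R0)) / φ lam ≤ b - a := by
      rw [sub_div]; linarith
    have h1 := (div_le_iff₀ hphilam).mp h0
    have hnn : 0 ≤ D * φ R0 / φ 1 := div_nonneg (mul_nonneg hDnn (hφnn R0 hR0nn)) hφ1.le
    have h2 : (b - a) * φ lam ≤ D * φ R0 := by
      calc (b - a) * φ lam ≤ (D * φ R0 / φ 1) * φ lam :=
            mul_le_mul_of_nonneg_right hba hphilam.le
        _ ≤ (D * φ R0 / φ 1) * φ 1 := mul_le_mul_of_nonneg_left hphilam1 hnn
        _ = D * φ R0 := div_mul_cancel₀ _ hφ1.ne'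
    have h3 : D * φ R0 ≤ (R + r + R0) * φ R0 :=
      mul_le_mul_of_nonneg_right hD (hφnn R0 hR0nn)
    linarith
  -- Step 5: conclusion
  by_contra hcon
  push_neg at hcon
  have hR1 : 1 < R := lt_of_le_of_lt (le_max_left _ _) hcon
  have hρKR : ρ K < R := lt_of_le_of_lt (le_max_right _ _) hcon
  have hΦrR0 : 0 < Φ (r + R0) :=
    lt_of_lt_of_le hΦrpos (hΦmono r (r + R0) hr.le (by linarith))
  have hKpos : 0 < K := by
    have h1 := hφnn R0 hR0nn
    have h2 : 0 ≤ (r + R0) * φ R0 := mul_nonneg (by linarith) h1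
    rw [hKdef]
    linarith
  have hρKpos : 0 < ρ K := hρpos K hKpos
  have h5 := hρ K hKpos
  have h6 : Φ (ρ K) / ρ K ≤ Φ R / R := hratio (ρ K) R hρKpos hρKR.le
  have h7 : K * R ≤ Φ R := by
    have hKR : K ≤ Φ R / R := le_trans h5 h6
    exact (le_div_iff₀ (by linarith : (0:ℝ) < R)).mp hKR
  have hB : 0 < (r + R0) * φ R0 + Φ (r + R0) := by
    have := mul_nonneg (by linarith : (0:ℝ) ≤ r + R0) (hφnn R0 hR0nn)
    linarith
  have h9 : (r + R0) * φ R0 + Φ (r + R0) < R * ((r + R0) * φ R0 + Φ (r + R0)) :=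
    (lt_mul_iff_one_lt_left hB).mpr hR1
  have hexp : (R + r + R0) * φ R0 = R * φ R0 + (r + R0) * φ R0 := by ring
  have hexp2 : R * φ R0 + R * ((r + R0) * φ R0 + Φ (r + R0)) = R * K := by
    rw [hKdef]; ring
  have hcomm : K * R = R * K := mul_comm K R
  linarith
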